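/- Let G = ⋃_{m=1}^∞ (m − 2^{−(m+2)}, m) and let F = [1/2, 1] \ ⋃_{m=1}^∞ ⋃_{n=m}^{2m−1} (m/n − 2^{−(m+2)}/n, m/n). Then F is a closed subset of [1/2,1] of Lebesgue measure at least 1/4, and for every positive integer n the dilation n·F = {nx : x ∈ F} is disjoint from G. -/

import Mathlib

open MeasureTheory Filter Set Topology

theorem stmt_16
    (G : Set ℝ) (hG : G = ⋃ m : ℕ, Ioo ((m + 1 : ℝ) - 2 ^ (-((m : ℤ) + 3))) (m + 1))
    (F : Set ℝ)
    (hF : F = Icc (1/2 : ℝ) 1 \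
      ⋃ (m : ℕ) (n : ℕ) (_ : m + 1 ≤ n) (_ : n ≤ 2 * (m + 1) - 1),
        Ioo (((m : ℝ) + 1) / n - 2 ^ (-((m : ℤ) + 3)) / n) (((m : ℝ) + 1) / n)) :
    IsClosed F ∧ F ⊆ Icc (1/2 : ℝ) 1 ∧ ENNReal.ofReal (1/4) ≤ volume F ∧
    ∀ n : ℕ, 0 < n → Disjoint ((fun x => (n : ℝ) * x) '' F) G := by
  set U : Set ℝ := ⋃ (m : ℕ) (n : ℕ) (_ : m + 1 ≤ n) (_ : n ≤ 2 * (m + 1) - 1),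
        Ioo (((m : ℝ) + 1) / n - 2 ^ (-((m : ℤ) + 3)) / n) (((m : ℝ) + 1) / n) with hUdef
  have hUopen : IsOpen U := by
    apply isOpen_iUnion; intro m; apply isOpen_iUnion; intro n
    apply isOpen_iUnion; intro _; apply isOpen_iUnion; intro _; exact isOpen_Ioo
  refine ⟨?_, ?_, ?_, ?_⟩
  · rw [hF]; exact isClosed_Icc.sdiff hUopen
  · rw [hF]; exact diff_subset
  · -- measure bound
    have hkey : ∀ m : ℕ, ∑' n : ℕ,
        volume (⋃ (_ : m + 1 ≤ n) (_ : n ≤ 2 * (m + 1) - 1),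
          Ioo (((m : ℝ) + 1) / n - 2 ^ (-((m : ℤ) + 3)) / n) (((m : ℝ) + 1) / n))
        ≤ ENNReal.ofReal ((2:ℝ) ^ (-((m : ℤ) + 3))) := by
      intro m
      set c : ℝ := (2:ℝ) ^ (-((m : ℤ) + 3)) with hc
      have hcpos : (0:ℝ) < c := by positivity
      have hstep : ∀ n : ℕ,
          volume (⋃ (_ : m + 1 ≤ n) (_ : n ≤ 2 * (m + 1) - 1),
            Ioo (((m : ℝ) + 1) / n - c / n) (((m : ℝ) + 1) / n))
          ≤ (if n ∈ Finset.Icc (m+1) (2*m+1) then ENNReal.ofReal (c / (m+1)) else 0) := by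
        intro n
        by_cases h : n ∈ Finset.Icc (m+1) (2*m+1)
        · rw [if_pos h]
          simp only [Finset.mem_Icc] at h
          have h1 : m + 1 ≤ n := h.1
          have h2 : n ≤ 2 * (m + 1) - 1 := by omega
          simp only [h1, h2, iUnion_true]
          rw [Real.volume_Ioo]
          apply ENNReal.ofReal_le_ofReal
          have hn0 : (0:ℝ) < n := by exact_mod_cast Nat.lt_of_lt_of_le (Nat.succ_pos m) h1
          have : ((m : ℝ) + 1) / n - (((m : ℝ) + 1) / n - c / n) = c / n := by ring
          rw [this]
          apply div_le_div_of_nonneg_left hcpos.le (by positivity)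
          exact_mod_cast h1
        · rw [if_neg h]
          simp only [Finset.mem_Icc, not_and_or, not_le] at h
          have : (⋃ (_ : m + 1 ≤ n) (_ : n ≤ 2 * (m + 1) - 1),
              Ioo (((m : ℝ) + 1) / n - c / n) (((m : ℝ) + 1) / n)) = ∅ := by
            ext x
            simp only [mem_iUnion, mem_empty_iff_false, iff_false]
            rintro ⟨h1, h2, -⟩
            omega
          rw [this, measure_empty]
      calc ∑' n : ℕ, volume (⋃ (_ : m + 1 ≤ n) (_ : n ≤ 2 * (m + 1) - 1),
              Ioo (((m : ℝ) + 1) / n - c / n) (((m : ℝ) + 1) / n))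
          ≤ ∑' n : ℕ, (if n ∈ Finset.Icc (m+1) (2*m+1) then ENNReal.ofReal (c / (m+1)) else 0) :=
            ENNReal.tsum_le_tsum hstep
        _ = ∑ n ∈ Finset.Icc (m+1) (2*m+1),
              (if n ∈ Finset.Icc (m+1) (2*m+1) then ENNReal.ofReal (c / (m+1)) else 0) :=
            tsum_eq_sum (fun n hn => if_neg hn)
        _ = ∑ n ∈ Finset.Icc (m+1) (2*m+1), ENNReal.ofReal (c / (m+1)) :=
            Finset.sum_congr rfl fun n hn => if_pos hn
        _ = (m + 1) • ENNReal.ofReal (c / (m+1)) := by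
            rw [Finset.sum_const, Nat.card_Icc]
            congr 1
            omega
        _ = ENNReal.ofReal ((m + 1 : ℝ)) * ENNReal.ofReal (c / (m+1)) := by
            rw [nsmul_eq_mul, ← ENNReal.ofReal_natCast]
            congr 2
            push_cast
            ring
        _ = ENNReal.ofReal ((m + 1 : ℝ) * (c / (m+1))) := by
            rw [← ENNReal.ofReal_mul (by positivity)]
        _ = ENNReal.ofReal c := by
            congr 1
            field_simp
    have hrw : ∀ m : ℕ, (2:ℝ) ^ (-((m : ℤ) + 3)) = (1/8) * (1/2)^m := by
      intro m
      have h2 : (2:ℝ) ^ (-(m:ℤ)) = (1/2)^m := by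
        rw [zpow_neg, zpow_natCast, ← inv_pow, one_div]
      rw [show (-((m : ℤ) + 3)) = -3 + (-(m:ℤ)) by ring, zpow_add₀ (by norm_num : (2:ℝ) ≠ 0), h2]
      norm_num
    have hUvol : volume U ≤ ENNReal.ofReal (1/4) := by
      calc volume U ≤ ∑' m : ℕ, volume (⋃ (n : ℕ) (_ : m + 1 ≤ n) (_ : n ≤ 2 * (m + 1) - 1),
              Ioo (((m : ℝ) + 1) / n - 2 ^ (-((m : ℤ) + 3)) / n) (((m : ℝ) + 1) / n)) :=
            measure_iUnion_le _
        _ ≤ ∑' m : ℕ, ∑' n : ℕ, volume (⋃ (_ : m + 1 ≤ n) (_ : n ≤ 2 * (m + 1) - 1),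
              Ioo (((m : ℝ) + 1) / n - 2 ^ (-((m : ℤ) + 3)) / n) (((m : ℝ) + 1) / n)) :=
            ENNReal.tsum_le_tsum fun m => measure_iUnion_le _
        _ ≤ ∑' m : ℕ, ENNReal.ofReal ((2:ℝ) ^ (-((m : ℤ) + 3))) := ENNReal.tsum_le_tsum hkey
        _ = ENNReal.ofReal (∑' m : ℕ, (2:ℝ) ^ (-((m : ℤ) + 3))) := by
            rw [ENNReal.ofReal_tsum_of_nonneg (fun m => by positivity) ?_]
            have : Summable (fun m : ℕ => (1/8 : ℝ) * (1/2)^m) :=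
              (summable_geometric_of_lt_one (by norm_num) (by norm_num)).mul_left _
            exact this.congr fun m => (hrw m).symm
        _ = ENNReal.ofReal (1/4) := by
            congr 1
            rw [tsum_congr hrw, tsum_mul_left, tsum_geometric_of_lt_one (by norm_num) (by norm_num)]
            norm_num
    have hsub : Icc (1/2 : ℝ) 1 ⊆ F ∪ U := by
      intro x hx
      by_cases h : x ∈ U
      · exact Or.inr h
      · exact Or.inl (by rw [hF]; exact ⟨hx, h⟩)
    have h1 : ENNReal.ofReal (1/2) ≤ volume F + ENNReal.ofReal (1/4) := by
      calc ENNReal.ofReal (1/2) = volume (Icc (1/2 : ℝ) 1) := by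
            rw [Real.volume_Icc]; norm_num
        _ ≤ volume (F ∪ U) := measure_mono hsub
        _ ≤ volume F + volume U := measure_union_le _ _
        _ ≤ volume F + ENNReal.ofReal (1/4) := add_le_add le_rfl hUvol
    have : ENNReal.ofReal (1/2) - ENNReal.ofReal (1/4) ≤ volume F :=
      tsub_le_iff_right.mpr h1
    rwa [← ENNReal.ofReal_sub _ (by norm_num), show (1/2 : ℝ) - 1/4 = 1/4 by norm_num] at this
  · intro n hn
    rw [Set.disjoint_left]
    rintro y ⟨x, hxF, rfl⟩ hyG
    rw [hF] at hxF
    obtain ⟨⟨hx1, hx2⟩, hxU⟩ := hxF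
    rw [hG] at hyG
    simp only [mem_iUnion, mem_Ioo] at hyG
    obtain ⟨M, h1, h2⟩ := hyG
    rw [hUdef] at hxU
    apply hxU
    have hn0 : (0:ℝ) < n := by exact_mod_cast hn
    have hc0 : (0:ℝ) < (2:ℝ) ^ (-((M : ℤ) + 3)) := by positivity
    have hc1 : (2:ℝ) ^ (-((M : ℤ) + 3)) ≤ 1/8 := by
      have h2 : (2:ℝ) ^ (-(M:ℤ)) = (1/2)^M := by
        rw [zpow_neg, zpow_natCast, ← inv_pow, one_div]
      have h3 : ((1:ℝ)/2)^M ≤ 1 := pow_le_one₀ (by norm_num) (by norm_num)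
      rw [show (-((M : ℤ) + 3)) = -3 + (-(M:ℤ)) by ring, zpow_add₀ (by norm_num : (2:ℝ) ≠ 0), h2]
      nlinarith [h3]
    have hnx_le : (n:ℝ) * x ≤ n := by nlinarith [mul_le_mul_of_nonneg_left hx2 hn0.le]
    have hnx_ge : (n:ℝ) / 2 ≤ n * x := by nlinarith [mul_le_mul_of_nonneg_left hx1 hn0.le]
    have hMn : M + 1 ≤ n := by
      have hlt : (M:ℝ) < n := by linarith
      exact_mod_cast Nat.succ_le_of_lt (by exact_mod_cast hlt)
    have hn2 : n ≤ 2 * (M + 1) - 1 := by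
      have : (n:ℝ) < 2 * ((M:ℝ) + 1) := by linarith
      have : n < 2 * (M + 1) := by exact_mod_cast this
      omega
    simp only [mem_iUnion, mem_Ioo]
    refine ⟨M, n, hMn, hn2, ?_, ?_⟩
    · rw [div_sub_div_same, div_lt_iff₀ hn0]
      nlinarith [h1]
    · rw [lt_div_iff₀ hn0]
      nlinarith [h2]
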